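/- Log-integral tail lemma, pointwise form (Lemma 8, first inequality): Let p and q be probability densities on (0,∞), everywhere positive on (0,∞), with survivor functions S_p(x) = ∫_x^∞ p(u) du and S_q(x) = ∫_x^∞ q(u) du, both positive for all x ≥ 0. Suppose that for the given x ≥ 0 the integral ∫_x^∞ p(u) ln(p(u)/q(u)) du is well-defined (its negative part is integrable). Then ∫_x^∞ p(u) ln(p(u)/q(u)) du ≥ S_p(x) · ln( S_p(x)/S_q(x) ). -/

import Mathlib

open MeasureTheory Set

/-- **Log-integral tail lemma, pointwise form.**
Let `p, q` be probability densities on `(0,∞)`, positive on `(0,∞)`, with positive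
survivor functions `S_p y = ∫_y^∞ p`, `S_q y = ∫_y^∞ q`.  Fix `x ≥ 0` and suppose the
negative part of `u ↦ p u * ln (p u / q u)` is integrable on `(x,∞)` (so that
`∫_x^∞ p ln (p/q)` is well-defined with value in `(-∞, ∞]`).  Then
`∫_x^∞ p ln (p/q) ≥ S_p x * ln (S_p x / S_q x)`.  This is expressed as:
the positive-part lower Lebesgue integral dominates
`S_p x * ln (S_p x / S_q x)` plus the (finite) integral of the negative part. -/
theorem log_integral_tail_pointwise
    (p q : ℝ → ℝ)
    (hp_meas : Measurable p) (hq_meas : Measurable q)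
    (hp_pos : ∀ y > (0 : ℝ), 0 < p y) (hq_pos : ∀ y > (0 : ℝ), 0 < q y)
    (hp_zero : ∀ y ≤ (0 : ℝ), p y = 0) (hq_zero : ∀ y ≤ (0 : ℝ), q y = 0)
    (hp_prob : ∫ y in Ioi (0 : ℝ), p y = 1) (hq_prob : ∫ y in Ioi (0 : ℝ), q y = 1)
    (hSp_pos : ∀ y ≥ (0 : ℝ), 0 < ∫ u in Ioi y, p u)
    (hSq_pos : ∀ y ≥ (0 : ℝ), 0 < ∫ u in Ioi y, q u)
    (x : ℝ) (hx : 0 ≤ x)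
    (hneg : IntegrableOn (fun u => max 0 (-(p u * Real.log (p u / q u)))) (Ioi x)) :
    ENNReal.ofReal
        ((∫ u in Ioi x, p u) * Real.log ((∫ u in Ioi x, p u) / ∫ u in Ioi x, q u) +
          ∫ u in Ioi x, max 0 (-(p u * Real.log (p u / q u)))) ≤
      ∫⁻ u in Ioi x, ENNReal.ofReal (p u * Real.log (p u / q u)) := by
  set f : ℝ → ℝ := fun u => p u * Real.log (p u / q u) with hf_def
  set a := ∫ u in Ioi x, p u with ha_def
  set b := ∫ u in Ioi x, q u with hb_def
  have ha : 0 < a := hSp_pos x hx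
  have hb : 0 < b := hSq_pos x hx
  by_cases htop : ∫⁻ u in Ioi x, ENNReal.ofReal (f u) = ⊤
  · rw [htop]; exact le_top
  have hp_int0 : IntegrableOn p (Ioi (0:ℝ)) := by
    by_contra h
    rw [integral_undef h] at hp_prob; norm_num at hp_prob
  have hq_int0 : IntegrableOn q (Ioi (0:ℝ)) := by
    by_contra h
    rw [integral_undef h] at hq_prob; norm_num at hq_prob
  have hsub : Ioi x ⊆ Ioi (0:ℝ) := Ioi_subset_Ioi hx
  have hp_int : IntegrableOn p (Ioi x) := hp_int0.mono_set hsub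
  have hq_int : IntegrableOn q (Ioi x) := hq_int0.mono_set hsub
  have hf_meas : Measurable f := hp_meas.mul (hp_meas.div hq_meas).log
  have hoRe : ∀ u : ℝ, ENNReal.ofReal (max 0 (f u)) = ENNReal.ofReal (f u) := by
    intro u
    rcases le_total 0 (f u) with h | h
    · rw [max_eq_right h]
    · rw [max_eq_left h, ENNReal.ofReal_of_nonpos h, ENNReal.ofReal_zero]
  have hpos_int : IntegrableOn (fun u => max 0 (f u)) (Ioi x) := by
    refine ⟨(measurable_const.max hf_meas).aestronglyMeasurable, ?_⟩
    refine (hasFiniteIntegral_iff_ofReal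
      (Filter.Eventually.of_forall fun u => le_max_left _ _)).2 ?_
    calc ∫⁻ u in Ioi x, ENNReal.ofReal (max 0 (f u))
        = ∫⁻ u in Ioi x, ENNReal.ofReal (f u) := by
          exact lintegral_congr fun u => hoRe u
      _ < ⊤ := lt_top_iff_ne_top.2 htop
  have hsplit : f = fun u => max 0 (f u) - max 0 (-(f u)) := by
    funext u
    rcases le_total 0 (f u) with h | h
    · rw [max_eq_right h, max_eq_left (neg_nonpos.2 h)]; ring
    · rw [max_eq_left h, max_eq_right (neg_nonneg.2 h)]; ring
  have hf_int : IntegrableOn f (Ioi x) := by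
    rw [hsplit]; exact hpos_int.sub hneg
  -- the key inequality
  have hkey : a * Real.log (a / b) ≤ ∫ u in Ioi x, f u := by
    set g : ℝ → ℝ := fun u => Real.log (a / b) * p u + p u - (a / b) * q u with hg_def
    have hg_int : IntegrableOn g (Ioi x) :=
      ((hp_int.const_mul _).add hp_int).sub (hq_int.const_mul _)
    have hg_integral : ∫ u in Ioi x, g u = a * Real.log (a / b) := by
      have e1 : ∫ u in Ioi x, g u =
          (∫ u in Ioi x, (Real.log (a / b) * p u + p u)) - ∫ u in Ioi x, (a / b) * q u :=
        integral_sub ((hp_int.const_mul _).add hp_int) (hq_int.const_mul _)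
      have e2 : ∫ u in Ioi x, (Real.log (a / b) * p u + p u) =
          (∫ u in Ioi x, Real.log (a / b) * p u) + ∫ u in Ioi x, p u :=
        integral_add (hp_int.const_mul _) hp_int
      rw [e1, e2, integral_const_mul, integral_const_mul,
        ← ha_def, ← hb_def, div_mul_cancel₀ _ hb.ne']
      ring
    have hmono : ∫ u in Ioi x, g u ≤ ∫ u in Ioi x, f u := by
      refine setIntegral_mono_on hg_int hf_int measurableSet_Ioi ?_
      intro u hu
      have hu0 : 0 < u := lt_of_le_of_lt hx hu
      have hpu : 0 < p u := hp_pos u hu0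
      have hqu : 0 < q u := hq_pos u hu0
      have hlog : Real.log (q u * a / (p u * b)) ≤ q u * a / (p u * b) - 1 :=
        Real.log_le_sub_one_of_pos (by positivity)
      have hmul := mul_le_mul_of_nonneg_left hlog hpu.le
      have heq : p u * (q u * a / (p u * b) - 1) = q u * (a / b) - p u := by
        field_simp
      rw [heq] at hmul
      have h3 : Real.log (q u * a / (p u * b)) =
          Real.log (q u) + Real.log a - (Real.log (p u) + Real.log b) := by
        rw [Real.log_div (by positivity) (by positivity),
          Real.log_mul hqu.ne' ha.ne', Real.log_mul hpu.ne' hb.ne']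
      rw [h3] at hmul
      have h1 : Real.log (p u / q u) = Real.log (p u) - Real.log (q u) :=
        Real.log_div hpu.ne' hqu.ne'
      have h2 : Real.log (a / b) = Real.log a - Real.log b :=
        Real.log_div ha.ne' hb.ne'
      simp only [hg_def, hf_def, h1, h2]
      nlinarith [hmul]
    linarith [hg_integral ▸ hmono]
  have hfi : ∫ u in Ioi x, f u =
      (∫ u in Ioi x, max 0 (f u)) - ∫ u in Ioi x, max 0 (-(f u)) := by
    conv_lhs => rw [hsplit]
    exact integral_sub hpos_int hneg
  have hfinal : a * Real.log (a / b) + (∫ u in Ioi x, max 0 (-(f u))) ≤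
      ∫ u in Ioi x, max 0 (f u) := by
    rw [hfi] at hkey; linarith
  calc ENNReal.ofReal (a * Real.log (a / b) + ∫ u in Ioi x, max 0 (-(f u)))
      ≤ ENNReal.ofReal (∫ u in Ioi x, max 0 (f u)) := ENNReal.ofReal_le_ofReal hfinal
    _ = ∫⁻ u in Ioi x, ENNReal.ofReal (max 0 (f u)) :=
        ofReal_integral_eq_lintegral_ofReal hpos_int
          (Filter.Eventually.of_forall fun u => le_max_left _ _)
    _ = ∫⁻ u in Ioi x, ENNReal.ofReal (f u) := lintegral_congr fun u => hoRe u
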